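/- Let P be a finite poset and R a consistent restriction function on P. Then the labeling f_max defined by f_max(p) = max R(p) for all p ∈ P belongs to Inc_R(P), and it is the unique element of Inc_R(P) having no raisable elements. -/

import Mathlib

/-- An increasing labeling of the finite poset `P` with respect to the
restriction function `R`. -/
def IncLabel {P : Type*} [PartialOrder P] (R : P → Finset ℤ) (f : P → ℤ) : Prop :=
  (∀ p, f p ∈ R p) ∧ ∀ ⦃p₁ p₂ : P⦄, p₁ < p₂ → f p₁ < f p₂

/-- `R` is consistent: minima and maxima of the label sets strictly increase
along covering relations. -/
def Consistent {P : Type*} [PartialOrder P] (R : P → Finset ℤ)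
    (hR : ∀ p, (R p).Nonempty) : Prop :=
  ∀ x y : P, x ⋖ y →
    (R x).min' (hR x) < (R y).min' (hR y) ∧ (R x).max' (hR x) < (R y).max' (hR y)

/-- An element `p` is raisable in `f` if its value can be strictly increased,
keeping all other values fixed, while remaining an increasing labeling. -/
def Raisable {P : Type*} [PartialOrder P] (R : P → Finset ℤ) (f : P → ℤ) (p : P) : Prop :=
  ∃ g : P → ℤ, IncLabel R g ∧ f p < g p ∧ ∀ p' : P, p' ≠ p → f p' = g p'


private lemma max_strictMono {P : Type*} [Fintype P] [PartialOrder P]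
    (R : P → Finset ℤ) (hR : ∀ p, (R p).Nonempty) (hcons : Consistent R hR) :
    ∀ ⦃p₁ p₂ : P⦄, p₁ < p₂ → (R p₁).max' (hR p₁) < (R p₂).max' (hR p₂) := by
  have : WellFoundedGT P := Finite.to_wellFoundedGT
  intro p₁
  induction p₁ using WellFoundedGT.induction with
  | _ p₁ ih =>
    intro p₂ h
    obtain ⟨x, hx, hxle⟩ := exists_covBy_le_of_lt h
    rcases eq_or_lt_of_le hxle with rfl | hlt
    · exact (hcons _ _ hx).2
    · exact lt_trans (hcons _ _ hx).2 (ih x hx.lt hlt)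

/-- The labeling `p ↦ max R(p)` is an increasing labeling, and it is the
unique increasing labeling with no raisable elements. -/
theorem stmt3 {P : Type*} [Fintype P] [PartialOrder P]
    (R : P → Finset ℤ) (hR : ∀ p, (R p).Nonempty) (hcons : Consistent R hR) :
    IncLabel R (fun p => (R p).max' (hR p)) ∧
    (∀ p : P, ¬ Raisable R (fun p => (R p).max' (hR p)) p) ∧
    ∀ f : P → ℤ, IncLabel R f → (∀ p : P, ¬ Raisable R f p) →
      f = fun p => (R p).max' (hR p) := by
  have hmax : IncLabel R (fun p => (R p).max' (hR p)) :=
    ⟨fun p => (R p).max'_mem (hR p), fun p₁ p₂ h => max_strictMono R hR hcons h⟩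
  refine ⟨hmax, ?_, ?_⟩
  · rintro p ⟨g, hg, hlt, -⟩
    exact absurd ((R p).le_max' _ (hg.1 p)) (not_le.mpr hlt)
  · intro f hf hnr
    classical
    by_contra hne
    have : ∃ p, f p ≠ (R p).max' (hR p) := by
      by_contra h
      push_neg at h
      exact hne (funext h)
    obtain ⟨p, hpS, hpmax⟩ := Finset.exists_maximal
      (s := Finset.univ.filter (fun p => f p ≠ (R p).max' (hR p)))
      (by obtain ⟨p, hp⟩ := this; exact ⟨p, by simp [hp]⟩)
    simp only [Finset.mem_filter, Finset.mem_univ, true_and] at hpS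
    have habove : ∀ q, p < q → f q = (R q).max' (hR q) := by
      intro q hq
      by_contra h
      exact absurd (hpmax (by simp [h]) hq.le) hq.not_ge
    apply hnr p
    refine ⟨Function.update f p ((R p).max' (hR p)), ⟨?_, ?_⟩, ?_, ?_⟩
    · intro q
      rcases eq_or_ne q p with rfl | h
      · simpa using (R q).max'_mem (hR q)
      · simpa [Function.update_of_ne h] using hf.1 q
    · intro p₁ p₂ h
      rcases eq_or_ne p₁ p with rfl | h1
      · rw [Function.update_self, Function.update_of_ne (ne_of_gt h), habove _ h]
        exact max_strictMono R hR hcons h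
      · rcases eq_or_ne p₂ p with rfl | h2
        · rw [Function.update_of_ne h1, Function.update_self]
          exact lt_of_lt_of_le (hf.2 h) ((R p₂).le_max' _ (hf.1 p₂))
        · rw [Function.update_of_ne h1, Function.update_of_ne h2]
          exact hf.2 h
    · rw [Function.update_self]
      exact lt_of_le_of_ne ((R p).le_max' _ (hf.1 p)) hpS
    · intro p' h
      rw [Function.update_of_ne h]
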